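/- Let D' = A'⊕B'⊕C' be the trivial double vector bundle with core C', and let A ⊂ A', B ⊂ B', C ⊂ C' be vector subbundles. Then the double vector subbundles of D' having side bundles A and B and core C are in one-to-one correspondence with sections of the bundle A*⊗B*⊗(C'/C); under this correspondence the trivial subbundle A⊕B⊕C corresponds to the zero section. (Equivalently, Dec(D') ≅ Γ(A'*⊗B'*⊗C') and the quotient Γ(A'*⊗B'*⊗C')/Γ_{A,B,C} is isomorphic to Γ(A*⊗B*⊗(C'/C)).) -/

import Mathlib

/-!
Linear-algebraic model of double vector bundles (fiberwise picture): see stmt_1.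
The trivial double vector bundle with sides `A'`, `B'` and core `C'` has total space
`A' × B' × C'`, and its decompositions are parametrised by bilinear maps
`Φ : A' → B' → C'` via `I_Φ (a,b,c) = (a, b, c + Φ a b)`.
-/

variable {K : Type*} [Field K]
variable {A' B' C' : Type*}
variable [AddCommGroup A'] [Module K A'] [AddCommGroup B'] [Module K B']
variable [AddCommGroup C'] [Module K C']

/-- `D` is a double vector subbundle of the trivial double vector bundle
`(A' ⊕ B' ⊕ C'; A', B'; M)` with side bundles `A ⊆ A'`, `B ⊆ B'` and core `C ⊆ C'`. -/
def IsDVSub (A : Submodule K A') (B : Submodule K B') (C : Submodule K C')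
    (D : Set (A' × B' × C')) : Prop :=
  (∀ d ∈ D, d.1 ∈ A ∧ d.2.1 ∈ B) ∧
  (∀ a ∈ A, ∀ b ∈ B, ∃ c, (a, b, c) ∈ D) ∧
  (∀ a b c b' c', (a, b, c) ∈ D → (a, b', c') ∈ D → (a, b + b', c + c') ∈ D) ∧
  (∀ a b c a' c', (a, b, c) ∈ D → (a', b, c') ∈ D → (a + a', b, c + c') ∈ D) ∧
  (∀ (t : K) a b c, (a, b, c) ∈ D → (a, t • b, t • c) ∈ D) ∧
  (∀ (t : K) a b c, (a, b, c) ∈ D → (t • a, b, t • c) ∈ D) ∧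
  (∀ c, ((0 : A'), (0 : B'), c) ∈ D ↔ c ∈ C)

/-- The trivial double vector subbundle `A ⊕ B ⊕ C` of `A' ⊕ B' ⊕ C'`. -/
def trivialDVSub (A : Submodule K A') (B : Submodule K B') (C : Submodule K C') :
    Set (A' × B' × C') :=
  {d | d.1 ∈ A ∧ d.2.1 ∈ B ∧ d.2.2 ∈ C}

section AuxDVB
variable {A : Submodule K A'} {B : Submodule K B'} {C : Submodule K C'}
  {D : Set (A' × B' × C')}

lemma dvsub_key (hD : IsDVSub A B C D) {a : A'} {b : B'} {c c' : C'}
    (h1 : (a, b, c) ∈ D) (h2 : (a, b, c') ∈ D) :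
    (Submodule.Quotient.mk c : C' ⧸ C) = Submodule.Quotient.mk c' := by
  obtain ⟨-, -, haddB, haddA, hsmB, hsmA, hcore⟩ := hD
  have h3 := hsmB (-1) a b c' h2
  rw [neg_one_smul, neg_one_smul] at h3
  have h4 := haddB a b c (-b) (-c') h1 h3
  rw [add_neg_cancel] at h4
  have h5 := hsmB 0 a b c h1
  rw [zero_smul, zero_smul] at h5
  have h6 := hsmA (-1) a 0 0 h5
  rw [neg_one_smul, smul_zero] at h6
  have h7 := haddA a 0 (c + -c') (-a) 0 h4 h6
  rw [add_neg_cancel, add_zero] at h7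
  have : c + -c' ∈ C := (hcore _).mp h7
  rw [Submodule.Quotient.eq]
  simpa [sub_eq_add_neg] using this

noncomputable def dvsubPick (hD : IsDVSub A B C D) (a : A) (b : B) : C' :=
  (hD.2.1 a a.2 b b.2).choose

lemma dvsubPick_mem (hD : IsDVSub A B C D) (a : A) (b : B) :
    ((a : A'), (b : B'), dvsubPick hD a b) ∈ D :=
  (hD.2.1 a a.2 b b.2).choose_spec

lemma dvsubPick_eq (hD : IsDVSub A B C D) {a : A} {b : B} {c : C'}
    (h : ((a : A'), (b : B'), c) ∈ D) :
    (Submodule.Quotient.mk (dvsubPick hD a b) : C' ⧸ C) = Submodule.Quotient.mk c :=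
  dvsub_key hD (dvsubPick_mem hD a b) h

noncomputable def dvsubToBilin (hD : IsDVSub A B C D) : A →ₗ[K] B →ₗ[K] (C' ⧸ C) where
  toFun a :=
    { toFun := fun b => Submodule.Quotient.mk (dvsubPick hD a b)
      map_add' := fun b b' => by
        have h := hD.2.2.1 a b (dvsubPick hD a b) b' (dvsubPick hD a b')
          (dvsubPick_mem hD a b) (dvsubPick_mem hD a b')
        have := dvsubPick_eq hD (a := a) (b := b + b') h
        simpa [Submodule.Quotient.mk_add] using this
      map_smul' := fun t b => by
        have h := hD.2.2.2.2.1 t a b (dvsubPick hD a b) (dvsubPick_mem hD a b)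
        have := dvsubPick_eq hD (a := a) (b := t • b) h
        simpa [Submodule.Quotient.mk_smul] using this }
  map_add' a a' := by
    ext b
    have h := hD.2.2.2.1 a b (dvsubPick hD a b) a' (dvsubPick hD a' b)
      (dvsubPick_mem hD a b) (dvsubPick_mem hD a' b)
    have := dvsubPick_eq hD (a := a + a') (b := b) h
    simp only [Submodule.Quotient.mk_add] at this
    exact this
  map_smul' t a := by
    ext b
    have h := hD.2.2.2.2.2.1 t a b (dvsubPick hD a b) (dvsubPick_mem hD a b)
    have := dvsubPick_eq hD (a := t • a) (b := b) h
    simp only [Submodule.Quotient.mk_smul] at this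
    exact this

def bilinToSet (A : Submodule K A') (B : Submodule K B') (C : Submodule K C')
    (Φ : A →ₗ[K] B →ₗ[K] (C' ⧸ C)) : Set (A' × B' × C') :=
  {p | ∃ (ha : p.1 ∈ A) (hb : p.2.1 ∈ B),
    (Submodule.Quotient.mk p.2.2 : C' ⧸ C) = Φ ⟨p.1, ha⟩ ⟨p.2.1, hb⟩}

lemma bilinToSet_isDVSub (Φ : A →ₗ[K] B →ₗ[K] (C' ⧸ C)) :
    IsDVSub A B C (bilinToSet A B C Φ) := by
  refine ⟨fun d hd => ⟨hd.1, hd.2.1⟩, ?_, ?_, ?_, ?_, ?_, ?_⟩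
  · intro a ha b hb
    obtain ⟨c, hc⟩ := Submodule.Quotient.mk_surjective C (Φ ⟨a, ha⟩ ⟨b, hb⟩)
    exact ⟨c, ha, hb, hc⟩
  · rintro a b c b' c' ⟨ha, hb, h⟩ ⟨ha', hb', h'⟩
    refine ⟨ha, B.add_mem hb hb', ?_⟩
    have : (⟨b + b', B.add_mem hb hb'⟩ : B) = ⟨b, hb⟩ + ⟨b', hb'⟩ := rfl
    simp only [this, map_add, Submodule.Quotient.mk_add, h, h']
  · rintro a b c a' c' ⟨ha, hb, h⟩ ⟨ha', hb', h'⟩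
    refine ⟨A.add_mem ha ha', hb, ?_⟩
    have : (⟨a + a', A.add_mem ha ha'⟩ : A) = ⟨a, ha⟩ + ⟨a', ha'⟩ := rfl
    simp only [this, map_add, LinearMap.add_apply, Submodule.Quotient.mk_add, h, h']
  · rintro t a b c ⟨ha, hb, h⟩
    refine ⟨ha, B.smul_mem t hb, ?_⟩
    have : (⟨t • b, B.smul_mem t hb⟩ : B) = t • ⟨b, hb⟩ := rfl
    simp only [this, map_smul, Submodule.Quotient.mk_smul, h]
  · rintro t a b c ⟨ha, hb, h⟩
    refine ⟨A.smul_mem t ha, hb, ?_⟩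
    have : (⟨t • a, A.smul_mem t ha⟩ : A) = t • ⟨a, ha⟩ := rfl
    simp only [this, map_smul, LinearMap.smul_apply, Submodule.Quotient.mk_smul, h]
  · intro c
    constructor
    · rintro ⟨ha, hb, h⟩
      rw [← Submodule.Quotient.mk_eq_zero C, h]
      exact show Φ 0 0 = 0 by simp
    · intro hc
      exact ⟨A.zero_mem, B.zero_mem, by
        rw [show Φ ⟨0, A.zero_mem⟩ ⟨0, B.zero_mem⟩ = Φ 0 0 from rfl]
        simpa [Submodule.Quotient.mk_eq_zero] using hc⟩

end AuxDVB

/-!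
STATEMENT 2.  The double vector subbundles of the trivial double vector bundle
`D' = A' ⊕ B' ⊕ C'` having side bundles `A`, `B` and core `C` are in one-to-one
correspondence with sections of `A^* ⊗ B^* ⊗ (C'/C)`, i.e. with bilinear maps
`A → B → C'/C`; under this correspondence a subbundle `D` corresponds to the map
sending `(a, b)` to the class of `c'` for any `(a,b,c') ∈ D`, and the trivial subbundle
`A ⊕ B ⊕ C` corresponds to the zero map.
-/
theorem dvb_subbundles_of_trivial_biject_with_hom_sections
    (A : Submodule K A') (B : Submodule K B') (C : Submodule K C') :
    ∃ e : {D : Set (A' × B' × C') // IsDVSub A B C D} ≃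
          (A →ₗ[K] B →ₗ[K] (C' ⧸ C)),
      (∀ (D : Set (A' × B' × C')) (hD : IsDVSub A B C D)
         (a : A) (b : B) (c' : C'), ((a : A'), (b : B'), c') ∈ D →
           e ⟨D, hD⟩ a b = Submodule.Quotient.mk c') ∧
      (∀ h : IsDVSub A B C (trivialDVSub A B C), e ⟨trivialDVSub A B C, h⟩ = 0) := by
  refine ⟨{ toFun := fun D => dvsubToBilin D.2
            invFun := fun Φ => ⟨bilinToSet A B C Φ, bilinToSet_isDVSub Φ⟩
            left_inv := ?_
            right_inv := ?_ }, ?_, ?_⟩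
  · rintro ⟨D, hD⟩
    apply Subtype.ext
    ext ⟨a, b, c⟩
    constructor
    case mpr =>
      intro hp
      exact ⟨(hD.1 _ hp).1, (hD.1 _ hp).2, (dvsubPick_eq hD hp).symm⟩
    case mp =>
      rintro ⟨ha, hb, h⟩
      have hc₀ := dvsubPick_mem hD ⟨a, ha⟩ ⟨b, hb⟩
      set c₀ := dvsubPick hD ⟨a, ha⟩ ⟨b, hb⟩ with hc₀def
      have hsub : c - c₀ ∈ C := by
        rw [← Submodule.Quotient.eq]; exact h
      have h0 : ((0 : A'), (0 : B'), c - c₀) ∈ D := (hD.2.2.2.2.2.2 _).mpr hsub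
      have h5 := hD.2.2.2.2.1 0 a b c₀ hc₀
      rw [zero_smul, zero_smul] at h5
      have h6 := hD.2.2.2.1 a 0 0 0 (c - c₀) h5 h0
      rw [add_zero, zero_add] at h6
      have h7 := hD.2.2.1 a b c₀ 0 (c - c₀) hc₀ h6
      rwa [add_zero, add_sub_cancel] at h7
  · intro Φ
    ext a b
    obtain ⟨ha, hb, h⟩ := dvsubPick_mem (bilinToSet_isDVSub Φ) a b
    exact h
  · intro D hD a b c' h
    exact dvsubPick_eq hD h
  · intro h
    ext a b
    have hm := dvsubPick_mem h a b
    show (Submodule.Quotient.mk (dvsubPick h a b) : C' ⧸ C) = 0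
    rw [Submodule.Quotient.mk_eq_zero]
    exact hm.2.2
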